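/- The global defensive alliance number of the lexicographic product C₃ ∘ C₃ equals 5. -/

import Mathlib

/-- Lexicographic product of simple graphs. -/
def lexProd {α β : Type*} (G : SimpleGraph α) (H : SimpleGraph β) :
    SimpleGraph (α × β) where
  Adj x y := G.Adj x.1 y.1 ∨ (x.1 = y.1 ∧ H.Adj x.2 y.2)
  symm := by
    constructor
    rintro x y (h | ⟨h1, h2⟩)
    · exact Or.inl h.symm
    · exact Or.inr ⟨h1.symm, h2.symm⟩
  loopless := by
    constructor
    rintro x (h | ⟨_, h2⟩)
    · exact G.irrefl h
    · exact H.irrefl h2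

/-- Closed neighborhood N[v]. -/
def closedNbhd {α : Type*} (G : SimpleGraph α) (v : α) : Set α :=
  insert v (G.neighborSet v)

/-- A defensive alliance: every vertex of S is defended. -/
def IsDefensiveAlliance {α : Type*} (G : SimpleGraph α) (S : Set α) : Prop :=
  ∀ v ∈ S, ((closedNbhd G v) \ S).ncard ≤ ((closedNbhd G v) ∩ S).ncard

/-- A global defensive alliance: a defensive alliance which is also dominating. -/
def IsGDA {α : Type*} (G : SimpleGraph α) (S : Set α) : Prop :=
  IsDefensiveAlliance G S ∧ ∀ v, v ∈ S ∨ ∃ u ∈ S, G.Adj v u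

/-- The global defensive alliance number. -/
noncomputable def gdaNumber {α : Type*} (G : SimpleGraph α) : ℕ :=
  sInf {k | ∃ S : Set α, IsGDA G S ∧ S.ncard = k}

/-- Number of vertices of S in the j-th copy of G² (copies indexed 1,…,n). -/
noncomputable def copyCount {n m : ℕ} (S : Set (Fin n × Fin m)) (j : ℕ) : ℕ :=
  (S ∩ {p | (p.1 : ℕ) + 1 = j}).ncard


abbrev G33 : SimpleGraph (Fin 3 × Fin 3) :=
  lexProd (SimpleGraph.cycleGraph 3) (SimpleGraph.cycleGraph 3)

lemma G33_complete : ∀ v w : Fin 3 × Fin 3, v = w ∨ G33.Adj v w := by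
  have : ∀ v w : Fin 3 × Fin 3, v = w ∨ (SimpleGraph.cycleGraph 3).Adj v.1 w.1 ∨
      (v.1 = w.1 ∧ (SimpleGraph.cycleGraph 3).Adj v.2 w.2) := by decide
  exact this

lemma closedNbhd_univ (v : Fin 3 × Fin 3) : closedNbhd G33 v = Set.univ := by
  ext w
  simp only [closedNbhd, Set.mem_insert_iff, SimpleGraph.mem_neighborSet, Set.mem_univ,
    iff_true]
  rcases G33_complete v w with h | h
  · exact Or.inl h.symm
  · exact Or.inr h

lemma card_univ33 : (Set.univ : Set (Fin 3 × Fin 3)).ncard = 9 := by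
  rw [Set.ncard_univ]; simp

theorem stmt_2 :
    gdaNumber (lexProd (SimpleGraph.cycleGraph 3) (SimpleGraph.cycleGraph 3)) = 5 := by
  have hmem : 5 ∈ {k | ∃ S : Set (Fin 3 × Fin 3), IsGDA G33 S ∧ S.ncard = k} := by
    refine ⟨(↑({((0:Fin 3),(0:Fin 3)),(0,1),(0,2),(1,0),(1,1)} : Finset (Fin 3 × Fin 3)) :
      Set (Fin 3 × Fin 3)), ⟨?_, ?_⟩, ?_⟩
    · intro v hv
      rw [closedNbhd_univ]
      rw [Set.ncard_diff (Set.subset_univ _), Set.univ_inter, card_univ33,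
        Set.ncard_coe_finset]
      decide
    · intro v
      rcases G33_complete v ((0:Fin 3),(0:Fin 3)) with h | h
      · exact Or.inl (by simp [h])
      · exact Or.inr ⟨((0:Fin 3),(0:Fin 3)), by simp, h⟩
    · rw [Set.ncard_coe_finset]; decide
  apply le_antisymm
  · exact Nat.sInf_le hmem
  · apply le_csInf ⟨5, hmem⟩
    rintro k ⟨S, ⟨hdef, hdom⟩, rfl⟩
    have hne : S.Nonempty := by
      rcases hdom ((0:Fin 3),(0:Fin 3)) with h | ⟨u, hu, _⟩
      · exact ⟨_, h⟩
      · exact ⟨u, hu⟩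
    obtain ⟨v, hv⟩ := hne
    have := hdef v hv
    rw [closedNbhd_univ, Set.ncard_diff (Set.subset_univ _), Set.univ_inter,
      card_univ33] at this
    have hle : S.ncard ≤ 9 := by
      rw [← card_univ33]; exact Set.ncard_le_ncard (Set.subset_univ _)
    omega
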